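/- Let (v^i)_{i∈ℕ} be i.i.d. random vectors in ℝ^m on a probability space (Ω, 𝓕, ℙ), and let γ_N, γ : ℝ^m → ℝ^n be Borel measurable maps such that γ_N converges to γ pointwise as N → ∞. Then for every bounded continuous function g : ℝ^n × ℝ^m → ℝ, the empirical averages (1/N) Σ_{i=1}^N g(γ_N(v^i), v^i) converge in probability to E[g(γ(v¹), v¹)] as N → ∞; equivalently, the empirical measures Q_N = (1/N) Σ_{i=1}^N δ_{(γ_N(v^i), v^i)} converge weakly in probability to the law of (γ(v¹), v¹). -/

import Mathlib

open MeasureTheory Filter ProbabilityTheory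

lemma tendstoInMeasure_add_aux {α ι : Type*} [MeasurableSpace α] {μ : Measure α} {l : Filter ι}
    {f g : ι → α → ℝ} {a b : α → ℝ}
    (hf : TendstoInMeasure μ f l a) (hg : TendstoInMeasure μ g l b) :
    TendstoInMeasure μ (fun i x => f i x + g i x) l (fun x => a x + b x) := by
  intro ε hε
  have h1 := hf (ε / 2) (ENNReal.half_pos hε.ne')
  have h2 := hg (ε / 2) (ENNReal.half_pos hε.ne')
  have hle : ∀ i, μ {x | ε ≤ edist (f i x + g i x) (a x + b x)} ≤
      μ {x | ε / 2 ≤ edist (f i x) (a x)} + μ {x | ε / 2 ≤ edist (g i x) (b x)} := by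
    intro i
    refine le_trans (measure_mono ?_) (measure_union_le _ _)
    intro x hx
    simp only [Set.mem_setOf_eq] at hx
    simp only [Set.mem_union, Set.mem_setOf_eq]
    by_contra hcon
    push_neg at hcon
    have h3 : edist (f i x + g i x) (a x + b x) ≤ edist (f i x) (a x) + edist (g i x) (b x) := by
      simp only [edist_dist]
      rw [← ENNReal.ofReal_add dist_nonneg dist_nonneg]
      exact ENNReal.ofReal_le_ofReal (dist_add_add_le (f i x) (g i x) (a x) (b x))
    have h4 := lt_of_le_of_lt (hx.trans h3) (ENNReal.add_lt_add hcon.1 hcon.2)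
    rw [ENNReal.add_halves] at h4
    exact lt_irrefl _ h4
  have hsum : Tendsto (fun i => μ {x | ε / 2 ≤ edist (f i x) (a x)} +
      μ {x | ε / 2 ≤ edist (g i x) (b x)}) l (nhds 0) := by
    have := Tendsto.add h1 h2
    simpa using this
  exact tendsto_of_tendsto_of_tendsto_of_le_of_le tendsto_const_nhds hsum
    (fun i => bot_le) hle

theorem stmt18 {Ω : Type*} [MeasurableSpace Ω] (P : Measure Ω) [IsProbabilityMeasure P]
    (m n : ℕ)
    -- `(v^i)` are i.i.d. random vectors in `ℝ^m`
    (v : ℕ → Ω → (Fin m → ℝ)) (hv_meas : ∀ i, Measurable (v i))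
    (hv_indep : iIndepFun v P)
    (hv_ident : ∀ i, Measure.map (v i) P = Measure.map (v 0) P)
    -- `γ_N → γ` pointwise, all Borel measurable
    (γN : ℕ → (Fin m → ℝ) → (Fin n → ℝ)) (hγN_meas : ∀ N, Measurable (γN N))
    (γ : (Fin m → ℝ) → (Fin n → ℝ)) (hγ_meas : Measurable γ)
    (hconv_pt : ∀ x, Filter.Tendsto (fun N => γN N x) Filter.atTop (nhds (γ x)))
    -- a bounded continuous test function `g`
    (g : (Fin n → ℝ) × (Fin m → ℝ) → ℝ) (hg_cont : Continuous g)
    (hg_bdd : ∃ C : ℝ, ∀ p, |g p| ≤ C) :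
    -- then the empirical averages `(1/N) Σ_{i<N} g(γ_N(v^i), v^i)` converge in
    -- probability to `E[g(γ(v¹), v¹)]`
    TendstoInMeasure P
      (fun (N : ℕ) ω => (N : ℝ)⁻¹ * ∑ i ∈ Finset.range N, g (γN N (v i ω), v i ω))
      Filter.atTop
      (fun _ => ∫ ω, g (γ (v 0 ω), v 0 ω) ∂P) := by
  obtain ⟨C, hC⟩ := hg_bdd
  -- the fixed measurable map x ↦ g (γ x, x)
  set φ : (Fin m → ℝ) → ℝ := fun x => g (γ x, x) with hφ_def
  have hφ_meas : Measurable φ := hg_cont.measurable.comp (hγ_meas.prodMk measurable_id)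
  -- measurability of the approximating maps
  have hφN_meas : ∀ N, Measurable (fun x => g (γN N x, x)) := fun N =>
    hg_cont.measurable.comp ((hγN_meas N).prodMk measurable_id)
  set Y : ℕ → Ω → ℝ := fun i ω => φ (v i ω) with hY_def
  have hY_meas : ∀ i, Measurable (Y i) := fun i => hφ_meas.comp (hv_meas i)
  -- identical distribution of the `v i`
  have hv_id : ∀ i, IdentDistrib (v i) (v 0) P P := fun i =>
    ⟨(hv_meas i).aemeasurable, (hv_meas 0).aemeasurable, hv_ident i⟩
  -- SLLN part
  have hY_int : Integrable (Y 0) P := by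
    refine ⟨(hY_meas 0).aestronglyMeasurable, ?_⟩
    refine HasFiniteIntegral.of_bounded (C := C) (ae_of_all _ fun ω => ?_)
    simpa [Real.norm_eq_abs] using hC (γ (v 0 ω), v 0 ω)
  have hY_indep : Pairwise (Function.onFun (IndepFun · · P) Y) := by
    intro i j hij
    exact (hv_indep.indepFun hij).comp hφ_meas hφ_meas
  have hY_ident : ∀ i, IdentDistrib (Y i) (Y 0) P P := fun i => (hv_id i).comp hφ_meas
  have hSLLN := strong_law_ae_real Y hY_int hY_indep hY_ident
  have hS : TendstoInMeasure P
      (fun (N : ℕ) ω => (N : ℝ)⁻¹ * ∑ i ∈ Finset.range N, Y i ω) atTop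
      (fun _ => ∫ ω, g (γ (v 0 ω), v 0 ω) ∂P) := by
    refine tendstoInMeasure_of_tendsto_ae (fun N =>
      ((Finset.measurable_sum _ (fun i _ => hY_meas i)).const_mul
        ((N : ℝ)⁻¹)).aestronglyMeasurable) ?_
    filter_upwards [hSLLN] with ω hω
    simpa [div_eq_inv_mul] using hω
  -- the error part
  set Z : ℕ → Ω → ℝ := fun N ω =>
    (N : ℝ)⁻¹ * ∑ i ∈ Finset.range N, (g (γN N (v i ω), v i ω) - Y i ω) with hZ_def
  have hZ_meas : ∀ N, Measurable (Z N) := by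
    intro N
    apply Measurable.const_mul
    apply Finset.measurable_sum
    intro i _
    exact ((hφN_meas N).comp (hv_meas i)).sub (hY_meas i)
  -- the L¹ bound
  set I : ℕ → ENNReal := fun N =>
    ∫⁻ x, ‖g (γN N x, x) - g (γ x, x)‖₊ ∂(Measure.map (v 0) P) with hI_def
  have hI_bound : ∀ N, eLpNorm (Z N) 1 P ≤ I N := by
    intro N
    rcases Nat.eq_zero_or_pos N with hN | hN
    · subst hN
      simp [Z, eLpNorm_one_eq_lintegral_enorm]
    have hmi : ∀ i : ℕ, Measurable fun ω =>
        (‖g (γN N (v i ω), v i ω) - Y i ω‖₊ : ENNReal) := fun i =>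
      (Measurable.sub ((hφN_meas N).comp (hv_meas i)) (hY_meas i)).nnnorm.coe_nnreal_ennreal
    have key : (∫⁻ ω, ‖Z N ω‖₊ ∂P) ≤
        (N : ENNReal)⁻¹ * ∑ i ∈ Finset.range N,
          ∫⁻ ω, (‖g (γN N (v i ω), v i ω) - Y i ω‖₊ : ENNReal) ∂P := by
      rw [← lintegral_finset_sum _ (fun i _ => hmi i),
        ← lintegral_const_mul _ (Finset.measurable_sum _ (fun i _ => hmi i))]
      apply lintegral_mono
      intro ω
      calc (‖Z N ω‖₊ : ENNReal)
          = ENNReal.ofReal ‖Z N ω‖ := (ofReal_norm _).symm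
        _ ≤ ENNReal.ofReal ((N : ℝ)⁻¹ *
            ∑ i ∈ Finset.range N, ‖g (γN N (v i ω), v i ω) - Y i ω‖) := by
            apply ENNReal.ofReal_le_ofReal
            rw [hZ_def]
            simp only [norm_mul, norm_inv, Real.norm_natCast]
            gcongr
            exact norm_sum_le _ _
        _ = (N : ENNReal)⁻¹ * ∑ i ∈ Finset.range N,
              (‖g (γN N (v i ω), v i ω) - Y i ω‖₊ : ENNReal) := by
            rw [ENNReal.ofReal_mul (by positivity), ENNReal.ofReal_sum_of_nonneg
              (fun i _ => norm_nonneg _)]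
            congr 1
            · rw [ENNReal.ofReal_inv_of_pos (by exact_mod_cast hN)]
              simp
            · exact Finset.sum_congr rfl fun i _ => ofReal_norm _
    have heach : ∀ i, (∫⁻ ω, (‖g (γN N (v i ω), v i ω) - Y i ω‖₊ : ENNReal) ∂P) = I N := by
      intro i
      have hm : Measurable fun x : Fin m → ℝ =>
          (‖g (γN N x, x) - g (γ x, x)‖₊ : ENNReal) :=
        (Measurable.sub (hφN_meas N) hφ_meas).nnnorm.coe_nnreal_ennreal
      have h1 : (∫⁻ ω, (‖g (γN N (v i ω), v i ω) - g (γ (v i ω), v i ω)‖₊ : ENNReal) ∂P)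
          = ∫⁻ x, (‖g (γN N x, x) - g (γ x, x)‖₊ : ENNReal) ∂(Measure.map (v i) P) :=
        (lintegral_map hm (hv_meas i)).symm
      rw [hI_def, ← hv_ident i]
      exact h1
    rw [eLpNorm_one_eq_lintegral_enorm]
    refine le_trans key ?_
    rw [Finset.sum_congr rfl (fun i _ => heach i), Finset.sum_const, Finset.card_range,
      nsmul_eq_mul, ← mul_assoc, ENNReal.inv_mul_cancel (by exact_mod_cast hN.ne')
      (ENNReal.natCast_ne_top N), one_mul]
  -- dominated convergence: I N → 0
  have hI_tendsto : Tendsto I atTop (nhds 0) := by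
    have := tendsto_lintegral_of_dominated_convergence
      (μ := Measure.map (v 0) P)
      (F := fun N x => (‖g (γN N x, x) - g (γ x, x)‖₊ : ENNReal))
      (f := fun _ => (0 : ENNReal))
      (bound := fun _ => ENNReal.ofReal (2 * C))
      (fun N => ((hφN_meas N).sub hφ_meas).nnnorm.coe_nnreal_ennreal)
      ?_ ?_ ?_
    · simpa using this
    · refine fun N => ae_of_all _ fun x => ?_
      show (‖g (γN N x, x) - g (γ x, x)‖₊ : ENNReal) ≤ ENNReal.ofReal (2 * C)
      rw [← enorm_eq_nnnorm, ← ofReal_norm]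
      apply ENNReal.ofReal_le_ofReal
      calc ‖g (γN N x, x) - g (γ x, x)‖ ≤ |g (γN N x, x)| + |g (γ x, x)| := by
            rw [Real.norm_eq_abs]; exact abs_sub _ _
        _ ≤ C + C := add_le_add (hC _) (hC _)
        _ = 2 * C := by ring
    · have : IsProbabilityMeasure (Measure.map (v 0) P) :=
        Measure.isProbabilityMeasure_map (hv_meas 0).aemeasurable
      simp [lintegral_const, ENNReal.mul_eq_top]
    · refine ae_of_all _ fun x => ?_
      have h1 : Tendsto (fun N => g (γN N x, x)) atTop (nhds (g (γ x, x))) :=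
        (hg_cont.tendsto _).comp ((hconv_pt x).prodMk_nhds tendsto_const_nhds)
      have h2 : Tendsto (fun N => g (γN N x, x) - g (γ x, x)) atTop (nhds 0) :=
        tendsto_sub_nhds_zero_iff.mpr h1
      have h3 : Tendsto (fun N => ‖g (γN N x, x) - g (γ x, x)‖₊) atTop (nhds 0) := by
        simpa using h2.nnnorm
      show Tendsto (fun N => ((‖g (γN N x, x) - g (γ x, x)‖₊ : NNReal) : ENNReal))
        atTop (nhds 0)
      simpa using ENNReal.tendsto_coe.mpr h3
  -- Z N → 0 in measure
  have hZ : TendstoInMeasure P Z atTop (fun _ => (0 : ℝ)) := by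
    refine tendstoInMeasure_of_tendsto_eLpNorm (p := 1) one_ne_zero
      (fun N => (hZ_meas N).aestronglyMeasurable)
      aestronglyMeasurable_const ?_
    have : ∀ N, Z N - (fun _ => (0 : ℝ)) = Z N := fun N => by ext ω; simp
    simp_rw [this]
    exact tendsto_of_tendsto_of_tendsto_of_le_of_le tendsto_const_nhds hI_tendsto
      (fun N => bot_le) hI_bound
  -- combine
  have hcomb := tendstoInMeasure_add_aux hZ hS
  have heq : ∀ N ω, Z N ω + (N : ℝ)⁻¹ * ∑ i ∈ Finset.range N, Y i ω =
      (N : ℝ)⁻¹ * ∑ i ∈ Finset.range N, g (γN N (v i ω), v i ω) := by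
    intro N ω
    rw [hZ_def]
    simp only [Finset.sum_sub_distrib]
    ring
  refine hcomb.congr (fun N => ae_of_all _ fun ω => heq N ω) (ae_of_all _ fun ω => ?_)
  show (0 : ℝ) + (∫ ω, g (γ (v 0 ω), v 0 ω) ∂P) = ∫ ω, g (γ (v 0 ω), v 0 ω) ∂P
  ring
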